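/- Let A, B, C be d×d complex matrices with equal diagonals. Then: (1) X^{(3)}_{(A,B,C)} is positive semidefinite if and only if every entry of A is a nonnegative real number, B is positive semidefinite, C is Hermitian, and A_ij·A_ji ≥ |C_ij|² for all i,j ∈ [d]; (2) the partial transpose (X^{(3)}_{(A,B,C)})^Γ is positive semidefinite if and only if every entry of A is a nonnegative real number, B is Hermitian, C is positive semidefinite, and A_ij·A_ji ≥ |B_ij|² for all i,j ∈ [d]. -/

import Mathlib

open Matrix
open scoped ComplexOrder

/-- The LDOI matrix `X^{(3)}_{(A,B,C)}` associated to a triple of `d × d` matrices. -/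
def X3 {d : ℕ} (A B C : Matrix (Fin d) (Fin d) ℂ) :
    Matrix (Fin d × Fin d) (Fin d × Fin d) ℂ :=
  Matrix.of fun p q =>
    if p.1 = q.1 ∧ p.2 = q.2 then A p.1 p.2
    else if p.1 = p.2 ∧ q.1 = q.2 then B p.1 q.1
    else if p.1 = q.2 ∧ p.2 = q.1 then C p.1 q.1
    else 0

/-- The partial transpose (on the second factor) of a bipartite matrix:
`⟨ik|X^Γ|jl⟩ = ⟨il|X|jk⟩`. -/
def partialTranspose {d : ℕ} (X : Matrix (Fin d × Fin d) (Fin d × Fin d) ℂ) :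
    Matrix (Fin d × Fin d) (Fin d × Fin d) ℂ :=
  Matrix.of fun p q => X (p.1, q.2) (q.1, p.2)

-- decomposition helper matrices
noncomputable def M1 {d : ℕ} (B : Matrix (Fin d) (Fin d) ℂ) :
    Matrix (Fin d × Fin d) (Fin d × Fin d) ℂ :=
  (Matrix.diagonal (fun p : Fin d × Fin d => if p.1 = p.2 then (1:ℂ) else 0))ᴴ *
    (B.submatrix Prod.fst Prod.fst) *
    Matrix.diagonal (fun p : Fin d × Fin d => if p.1 = p.2 then (1:ℂ) else 0)

def M2 {d : ℕ} (A C : Matrix (Fin d) (Fin d) ℂ) :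
    Matrix (Fin d × Fin d) (Fin d × Fin d) ℂ :=
  Matrix.of fun p q => if p.1 = p.2 then 0 else
    ((if q = p then A p.1 p.2 else 0) + (if q = (p.2, p.1) then C p.1 p.2 else 0))

lemma X3_decomp {d : ℕ} (A B C : Matrix (Fin d) (Fin d) ℂ)
    (hdiag : ∀ i, A i i = B i i ∧ A i i = C i i) :
    X3 A B C = M1 B + M2 A C := by
  ext ⟨i, j⟩ ⟨k, l⟩
  simp only [X3, M1, M2, Matrix.add_apply, of_apply, Matrix.diagonal_conjTranspose,
    Matrix.diagonal_mul, Matrix.mul_diagonal, Matrix.submatrix_apply, Pi.star_apply,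
    star_one, star_zero, Prod.mk.injEq]
  by_cases hij : i = j <;> by_cases hkl : k = l
  · subst hij; subst hkl
    by_cases hik : i = k
    · subst hik; simp [(hdiag i).1]
    · simp [hik]
  · subst hij
    have h1 : ¬(i = k ∧ i = l) := by rintro ⟨rfl, rfl⟩; exact hkl rfl
    have h2 : ¬(i = l ∧ i = k) := by rintro ⟨rfl, rfl⟩; exact hkl rfl
    have h3 : ¬(k = i ∧ l = i) := by rintro ⟨rfl, rfl⟩; exact hkl rfl
    simp [h1, h2, h3, hkl]
  · subst hkl
    have h1 : ¬(i = k ∧ j = k) := by rintro ⟨rfl, rfl⟩; exact hij rfl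
    have h2 : ¬(i = k ∧ j = k) := h1
    have h3 : ¬(k = i ∧ k = j) := by rintro ⟨rfl, rfl⟩; exact hij rfl
    have h4 : ¬(k = j ∧ k = i) := by rintro ⟨rfl, rfl⟩; exact hij (rfl)
    simp [h1, h3, h4, hij]
  · by_cases h5 : i = k ∧ j = l
    · obtain ⟨rfl, rfl⟩ := h5
      have h6 : ¬(i = j ∧ j = i) := fun h => hij h.1
      simp [hij, h6]
    · by_cases h6 : i = l ∧ j = k
      · obtain ⟨rfl, rfl⟩ := h6
        have h7 : ¬(j = i ∧ i = j) := fun h => hij h.2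
        simp [hij, h5, h7, fun h : j = i => hij h.symm]
      · have h7 : ¬(k = i ∧ l = j) := fun h => h5 ⟨h.1.symm, h.2.symm⟩
        have h8 : ¬(k = j ∧ l = i) := fun h => h6 ⟨h.2.symm, h.1.symm⟩
        simp [h5, h6, h7, h8, hij, hkl]

lemma aux_psd_diag {n : Type*} [Fintype n] [DecidableEq n] {M : Matrix n n ℂ}
    (hM : M.PosSemidef) (i : n) : 0 ≤ M i i := by
  have h := hM.dotProduct_mulVec_nonneg (Pi.single i 1)
  simpa [dotProduct, mulVec, Pi.single_apply, Finset.sum_ite_eq] using h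

lemma aux_two {M : Matrix (Fin 2) (Fin 2) ℂ} (hM : M.PosSemidef) :
    ‖(M 0 1)‖ ^ 2 ≤ (M 0 0).re * (M 1 1).re := by
  have h00 := aux_psd_diag hM 0
  have h11 := aux_psd_diag hM 1
  have h00re : 0 ≤ (M 0 0).re := (Complex.le_def.mp h00).1
  have h11re : 0 ≤ (M 1 1).re := (Complex.le_def.mp h11).1
  have h00r : M 0 0 = ((M 0 0).re : ℂ) :=
    Complex.eq_re_of_ofReal_le (by exact_mod_cast h00)
  have h11r : M 1 1 = ((M 1 1).re : ℂ) :=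
    Complex.eq_re_of_ofReal_le (by exact_mod_cast h11)
  have h10 : M 1 0 = (starRingEnd ℂ) (M 0 1) := by
    have := congrFun (congrFun hM.1 1) 0
    simpa [Matrix.conjTranspose_apply] using this.symm
  set β := M 0 1 with hβ
  have hm : (starRingEnd ℂ) β * β = ((‖β‖ : ℝ) : ℂ) ^ 2 := by
    rw [mul_comm, Complex.mul_conj, ← Complex.sq_norm]
    push_cast
    ring
  have key : ∀ t : ℝ, 0 ≤ ((M 0 0).re * ‖β‖ ^ 2) * (t * t) +
      (2 * ‖β‖ ^ 2) * t + (M 1 1).re := by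
    intro t
    have h := hM.dotProduct_mulVec_nonneg ![β * (t:ℂ), 1]
    have hform : star ![β * (t:ℂ), 1] ⬝ᵥ M *ᵥ ![β * (t:ℂ), 1]
        = ((((M 0 0).re * ‖β‖ ^ 2) * (t * t) +
          (2 * ‖β‖ ^ 2) * t + (M 1 1).re : ℝ) : ℂ) := by
      simp only [dotProduct, mulVec, Fin.sum_univ_two, Matrix.cons_val_zero,
        Matrix.cons_val_one, Matrix.head_cons, Pi.star_apply, star_mul', h10]
      rw [h00r, h11r]
      simp only [star_one, one_mul, mul_one, RCLike.star_def, Complex.conj_ofReal,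
        Complex.ofReal_re]
      push_cast
      linear_combination (((M 0 0).re : ℂ) * t * t + 2 * t) * hm
    rw [hform] at h
    exact Complex.zero_le_real.mp h
  have hdisc := discrim_le_zero key
  rw [discrim] at hdisc
  rcases eq_or_ne β 0 with hb | hb
  · rw [hb]
    simpa using mul_nonneg h00re h11re
  · have habs : 0 < ‖β‖ := norm_pos_iff.mpr hb
    nlinarith [pow_pos habs 2]

lemma form2_nonneg (r s : ℝ) (hr : 0 ≤ r) (hs : 0 ≤ s) (β a b : ℂ)
    (hβ : ‖β‖ ^ 2 ≤ r * s) :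
    0 ≤ (starRingEnd ℂ) a * ((r : ℂ) * a + β * b) +
      (starRingEnd ℂ) b * ((s : ℂ) * b + (starRingEnd ℂ) β * a) := by
  have e1 : (starRingEnd ℂ) a * a = ((‖a‖ : ℝ) : ℂ) ^ 2 := by
    rw [mul_comm, Complex.mul_conj, ← Complex.sq_norm]; push_cast; ring
  have e2 : (starRingEnd ℂ) b * b = ((‖b‖ : ℝ) : ℂ) ^ 2 := by
    rw [mul_comm, Complex.mul_conj, ← Complex.sq_norm]; push_cast; ring
  set w : ℂ := (starRingEnd ℂ) a * β * b with hw
  have e3 : (starRingEnd ℂ) a * β * b + (starRingEnd ℂ) b * ((starRingEnd ℂ) β * a)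
      = 2 * ((w.re : ℝ) : ℂ) := by
    have h : (starRingEnd ℂ) b * ((starRingEnd ℂ) β * a) = (starRingEnd ℂ) w := by
      simp only [hw, _root_.map_mul, Complex.conj_conj]; ring
    rw [h, Complex.add_conj]
    push_cast; ring
  have hz : (starRingEnd ℂ) a * ((r : ℂ) * a + β * b) +
      (starRingEnd ℂ) b * ((s : ℂ) * b + (starRingEnd ℂ) β * a)
      = ((r * ‖a‖ ^ 2 + s * ‖b‖ ^ 2 + 2 * w.re : ℝ) : ℂ) := by
    push_cast
    linear_combination (r : ℂ) * e1 + (s : ℂ) * e2 + e3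
  rw [hz, Complex.zero_le_real]
  have ha0 : 0 ≤ ‖a‖ := norm_nonneg a
  have hb0 : 0 ≤ ‖b‖ := norm_nonneg b
  have hβ0 : 0 ≤ ‖β‖ := norm_nonneg β
  have hβle : ‖β‖ ≤ Real.sqrt r * Real.sqrt s := by
    rw [← Real.sqrt_mul hr]
    calc ‖β‖ = Real.sqrt (‖β‖ ^ 2) := (Real.sqrt_sq hβ0).symm
      _ ≤ Real.sqrt (r * s) := Real.sqrt_le_sqrt hβ
  have h4 : ‖β‖ * (‖a‖ * ‖b‖)
      ≤ (Real.sqrt r * Real.sqrt s) * (‖a‖ * ‖b‖) :=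
    mul_le_mul_of_nonneg_right hβle (mul_nonneg ha0 hb0)
  have habsw : ‖w‖ = ‖a‖ * ‖β‖ * ‖b‖ := by
    simp [hw, _root_.map_mul]
  have h5 : -(‖a‖ * ‖β‖ * ‖b‖) ≤ w.re := by
    have h6 := Complex.abs_re_le_norm w
    have h7 := neg_abs_le w.re
    rw [habsw] at h6
    cases abs_cases w.re with
    | inl h => linarith [h.1]
    | inr h => linarith [h.1]
  nlinarith [sq_nonneg (Real.sqrt r * ‖a‖ - Real.sqrt s * ‖b‖),
    Real.sq_sqrt hr, Real.sq_sqrt hs]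

lemma M2_form {d : ℕ} (A C : Matrix (Fin d) (Fin d) ℂ) (x : Fin d × Fin d → ℂ) :
    star x ⬝ᵥ (M2 A C) *ᵥ x = ∑ p : Fin d × Fin d,
      (if p.1 = p.2 then 0 else
        (starRingEnd ℂ) (x p) * (A p.1 p.2 * x p + C p.1 p.2 * x (p.2, p.1))) := by
  simp only [dotProduct, mulVec]
  refine Finset.sum_congr rfl fun p _ => ?_
  by_cases hp : p.1 = p.2
  · simp [M2, hp, dotProduct]
  · simp only [M2, of_apply, hp, if_false, dotProduct, Pi.star_apply, RCLike.star_def]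
    rw [Finset.sum_congr rfl (fun q _ => add_mul _ _ (x q)), Finset.sum_add_distrib]
    simp [ite_mul, zero_mul, Finset.sum_ite_eq', mul_add]

lemma M2_nonneg {d : ℕ} (A C : Matrix (Fin d) (Fin d) ℂ)
    (h1 : ∀ i j, (A i j).im = 0 ∧ 0 ≤ (A i j).re) (h3 : C.IsHermitian)
    (h4 : ∀ i j, ‖(C i j)‖ ^ 2 ≤ (A i j).re * (A j i).re)
    (x : Fin d × Fin d → ℂ) : 0 ≤ star x ⬝ᵥ (M2 A C) *ᵥ x := by
  classical
  set g : Fin d × Fin d → ℂ := fun p =>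
    if p.1 = p.2 then 0 else
      (starRingEnd ℂ) (x p) * (A p.1 p.2 * x p + C p.1 p.2 * x (p.2, p.1)) with hg
  have hform : star x ⬝ᵥ (M2 A C) *ᵥ x = ∑ p : Fin d × Fin d, g p := M2_form A C x
  have hswap : ∑ p : Fin d × Fin d, g (Prod.swap p) = ∑ p : Fin d × Fin d, g p :=
    Fintype.sum_equiv (Equiv.prodComm (Fin d) (Fin d)) _ _ (fun p => rfl)
  have hsum : 0 ≤ ∑ p : Fin d × Fin d, (g p + g (Prod.swap p)) := by
    apply Finset.sum_nonneg
    rintro ⟨i, j⟩ -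
    by_cases hij : i = j
    · simp [hg, hij]
    · have hji : ¬(j = i) := fun h => hij h.symm
      have hAij : A i j = (((A i j).re : ℝ) : ℂ) := by
        rw [← Complex.re_add_im (A i j), (h1 i j).1]; simp
      have hAji : A j i = (((A j i).re : ℝ) : ℂ) := by
        rw [← Complex.re_add_im (A j i), (h1 j i).1]; simp
      have hCji : C j i = (starRingEnd ℂ) (C i j) := (h3.apply j i).symm ▸ rfl
      simp only [hg, Prod.swap_prod_mk, hij, hji, if_false]
      rw [hAij, hAji, hCji]
      exact form2_nonneg _ _ (h1 i j).2 (h1 j i).2 _ _ _ (h4 i j)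
  rw [Finset.sum_add_distrib, hswap] at hsum
  rw [hform]
  rw [Complex.le_def] at hsum ⊢
  constructor
  · have := hsum.1
    simp only [Complex.add_re, Complex.zero_re] at this ⊢
    linarith
  · have := hsum.2
    simp only [Complex.add_im, Complex.zero_im] at this ⊢
    linarith

lemma X3_herm {d : ℕ} (A B C : Matrix (Fin d) (Fin d) ℂ)
    (h1 : ∀ i j, (A i j).im = 0) (h2 : B.IsHermitian) (h3 : C.IsHermitian) :
    (X3 A B C).IsHermitian := by
  ext ⟨i, j⟩ ⟨k, l⟩
  simp only [conjTranspose_apply, X3, of_apply]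
  by_cases c1 : i = k ∧ j = l
  · obtain ⟨rfl, rfl⟩ := c1
    simp only [and_self, if_true, if_pos trivial]
    exact Complex.conj_eq_iff_im.mpr (h1 i j)
  · have c1' : ¬(k = i ∧ l = j) := fun h => c1 ⟨h.1.symm, h.2.symm⟩
    rw [if_neg c1', if_neg c1]
    by_cases c2 : i = j ∧ k = l
    · obtain ⟨rfl, rfl⟩ := c2
      rw [if_pos ⟨rfl, rfl⟩, if_pos ⟨rfl, rfl⟩]
      exact h2.apply i k
    · have c2' : ¬(k = l ∧ i = j) := fun h => c2 ⟨h.2, h.1⟩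
      rw [if_neg c2', if_neg c2]
      by_cases c3 : i = l ∧ j = k
      · obtain ⟨rfl, rfl⟩ := c3
        rw [if_pos ⟨rfl, rfl⟩, if_pos ⟨rfl, rfl⟩]
        exact h3.apply i j
      · have c3' : ¬(k = j ∧ l = i) := fun h => c3 ⟨h.2.symm, h.1.symm⟩
        rw [if_neg c3', if_neg c3]
        exact star_zero ℂ

lemma main_iff {d : ℕ} (A B C : Matrix (Fin d) (Fin d) ℂ)
    (hdiag : ∀ i, A i i = B i i ∧ A i i = C i i) :
    (X3 A B C).PosSemidef ↔
      (∀ i j, (A i j).im = 0 ∧ 0 ≤ (A i j).re) ∧ B.PosSemidef ∧ C.IsHermitian ∧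
        ∀ i j, ‖(C i j)‖ ^ 2 ≤ (A i j).re * (A j i).re := by
  constructor
  · intro hX
    have hA : ∀ i j, (A i j).im = 0 ∧ 0 ≤ (A i j).re := by
      intro i j
      have h := aux_psd_diag hX (i, j)
      have hXe : X3 A B C (i, j) (i, j) = A i j := by simp [X3]
      rw [hXe] at h
      exact ⟨(Complex.le_def.mp h).2.symm, (Complex.le_def.mp h).1⟩
    have hBsub : (X3 A B C).submatrix (fun i : Fin d => (i, i)) (fun i : Fin d => (i, i)) = B := by
      ext i j
      by_cases h : i = j
      · subst h; simp [X3, (hdiag i).1]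
      · simp [X3, Matrix.submatrix_apply, h]
    have hB : B.PosSemidef := hBsub ▸ hX.submatrix _
    have hC : C.IsHermitian := by
      ext i j
      rw [conjTranspose_apply]
      by_cases h : i = j
      · subst h
        have : C i i = A i i := (hdiag i).2.symm
        rw [this]
        exact Complex.conj_eq_iff_im.mpr (hA i i).1
      · have h' : ¬(j = i) := fun hh => h hh.symm
        have e1 : X3 A B C (j, i) (i, j) = C j i := by simp [X3, h, h']
        have e2 : X3 A B C (i, j) (j, i) = C i j := by simp [X3, h, h']
        have := congrFun (congrFun hX.1 (i, j)) (j, i)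
        rw [conjTranspose_apply, e1, e2] at this
        exact this
    refine ⟨hA, hB, hC, fun i j => ?_⟩
    by_cases h : i = j
    · subst h
      have hc : C i i = A i i := (hdiag i).2.symm
      have him : (A i i).im = 0 := (hA i i).1
      have : ‖(A i i)‖ = (A i i).re := by
        rw [← Complex.re_add_im (A i i), him]
        simp [Complex.norm_real, abs_of_nonneg (hA i i).2]
      rw [hc, this]
      nlinarith [(hA i i).2]
    · have h' : ¬(j = i) := fun hh => h hh.symm
      have hsub := hX.submatrix ![((i : Fin d), (j : Fin d)), (j, i)]
      have := aux_two hsub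
      simpa [Matrix.submatrix_apply, X3, h, h'] using this
  · rintro ⟨h1, h2, h3, h4⟩
    refine Matrix.PosSemidef.of_dotProduct_mulVec_nonneg ?_ ?_
    · exact X3_herm A B C (fun i j => (h1 i j).1) h2.isHermitian h3
    · intro x
      rw [X3_decomp A B C hdiag, Matrix.add_mulVec, dotProduct_add]
      have hm1 : 0 ≤ star x ⬝ᵥ M1 B *ᵥ x :=
        ((h2.submatrix Prod.fst).conjTranspose_mul_mul_same _).dotProduct_mulVec_nonneg x
      exact add_nonneg hm1 (M2_nonneg A C h1 h3 h4 x)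

lemma pt_X3 {d : ℕ} (A B C : Matrix (Fin d) (Fin d) ℂ) :
    partialTranspose (X3 A B C) = X3 A C B := by
  ext ⟨i, k⟩ ⟨j, l⟩
  simp only [partialTranspose, X3, of_apply]
  split_ifs <;> first
    | rfl
    | tauto
    | (rename_i ha hb; obtain ⟨rfl, rfl⟩ := ha; first | rfl | tauto)
    | (rename_i ha hb hc; obtain ⟨rfl, rfl⟩ := ha; first | rfl | tauto)
    | aesop

theorem stmt5 {d : ℕ} (A B C : Matrix (Fin d) (Fin d) ℂ)
    (hdiag : ∀ i, A i i = B i i ∧ A i i = C i i) :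
    ((X3 A B C).PosSemidef ↔
      (∀ i j, (A i j).im = 0 ∧ 0 ≤ (A i j).re) ∧ B.PosSemidef ∧ C.IsHermitian ∧
        ∀ i j, ‖(C i j)‖ ^ 2 ≤ (A i j).re * (A j i).re) ∧
    ((partialTranspose (X3 A B C)).PosSemidef ↔
      (∀ i j, (A i j).im = 0 ∧ 0 ≤ (A i j).re) ∧ B.IsHermitian ∧ C.PosSemidef ∧
        ∀ i j, ‖(B i j)‖ ^ 2 ≤ (A i j).re * (A j i).re) := by
  constructor
  · exact main_iff A B C hdiag
  · rw [pt_X3]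
    have h := main_iff A C B (fun i => ⟨(hdiag i).2, (hdiag i).1⟩)
    rw [h]
    tauto
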